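/- Let G be a finite connected multigraph without self-loops on vertex set V, with graph lattice Λ(G) = ℤ^V/ℤ[V]. Let x ∈ ℤ^V with x ∉ ℤ[V]. Then the class of x in Λ(G) is irreducible if and only if there exists a subset R ⊆ V with R ≠ ∅ and R ≠ V such that x − [R] ∈ ℤ[V] and both the sub-multigraphs of G induced on R and on V∖R are connected. -/

import Mathlib

/-- The bilinear form of the multigraph with edge multiplicities `ε`:
`x·y = Σ_v d(v) x_v y_v − Σ_{v≠w} ε(v,w) x_v y_w`, where `d(v) = Σ_w ε(v,w)`. -/
def gform {V : Type*} [Fintype V] [DecidableEq V] (ε : V → V → ℕ) (x y : V → ℤ) : ℤ :=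
  (∑ v, (∑ w, (ε v w : ℤ)) * (x v * y v)) -
    ∑ v, ∑ w ∈ Finset.univ.filter (· ≠ v), (ε v w : ℤ) * (x v * y w)

/-- The simple graph underlying the multigraph with edge multiplicities `ε`. -/
def gGraph {V : Type*} (ε : V → V → ℕ) : SimpleGraph V :=
  SimpleGraph.fromRel (fun v w => 0 < ε v w)

/-- Connectivity of the sub-multigraph induced on the set `S`. -/
def gConnOn {V : Type*} (ε : V → V → ℕ) (S : Set V) : Prop :=
  (SimpleGraph.fromRel (fun v w : S => 0 < ε v.1 w.1)).Connected

/-- `ℤ[V]`, the span of the all-ones vector `[V]` in `ℤ^V`. -/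
def onesSub (V : Type*) : Submodule ℤ (V → ℤ) :=
  Submodule.span ℤ ({fun _ => (1 : ℤ)} : Set (V → ℤ))

/-- The characteristic vector `[R] ∈ ℤ^V` of a finite set of vertices. -/
def chiF {V : Type*} [DecidableEq V] (R : Finset V) : V → ℤ :=
  fun v => if v ∈ R then 1 else 0

/-- Irreducibility, in the graph lattice `Λ(G) = ℤ^V/ℤ[V]`, of the class of
`z : ℤ^V`, stated on representatives: the class of `z` cannot be written as
`x + y` with `x, y` nonzero classes and `x·y ≥ 0`. -/
def gIrredRep {V : Type*} [Fintype V] [DecidableEq V] (ε : V → V → ℕ) (z : V → ℤ) : Prop :=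
  ¬ ∃ x y : V → ℤ, x ∉ onesSub V ∧ y ∉ onesSub V ∧
      z - (x + y) ∈ onesSub V ∧ 0 ≤ gform ε x y

section Helpers

open Finset

lemma mem_onesSub_iff {V : Type*} (x : V → ℤ) :
    x ∈ onesSub V ↔ ∃ c : ℤ, ∀ v, x v = c := by
  unfold onesSub
  rw [Submodule.mem_span_singleton]
  constructor
  · rintro ⟨c, hc⟩
    exact ⟨c, fun v => by rw [← hc]; simp⟩
  · rintro ⟨c, hc⟩
    refine ⟨c, ?_⟩
    funext v
    simp [hc v]

lemma two_gform {V : Type*} [Fintype V] [DecidableEq V] (ε : V → V → ℕ)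
    (hsymm : ∀ v w, ε v w = ε w v) (hloop : ∀ v, ε v v = 0) (x y : V → ℤ) :
    2 * gform ε x y = ∑ v, ∑ w, (ε v w : ℤ) * ((x v - x w) * (y v - y w)) := by
  unfold gform
  have h1 : ∀ v, ∑ w ∈ Finset.univ.filter (· ≠ v), (ε v w : ℤ) * (x v * y w)
      = ∑ w, (ε v w : ℤ) * (x v * y w) := by
    intro v
    rw [Finset.sum_filter]
    apply Finset.sum_congr rfl
    intro w _
    by_cases h : w = v
    · subst h; simp [hloop]
    · simp [h]
  simp_rw [h1]
  have e1 : ∑ v, ∑ w, (ε v w : ℤ) * ((x v - x w) * (y v - y w))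
      = ∑ v, ∑ w, ((ε v w : ℤ) * (x v * y v) + (ε v w : ℤ) * (x w * y w)
          - (ε v w : ℤ) * (x v * y w) - (ε v w : ℤ) * (x w * y v)) := by
    refine Finset.sum_congr rfl fun v _ => Finset.sum_congr rfl fun w _ => by ring
  have hB : ∑ v, ∑ w, (ε v w : ℤ) * (x w * y w) = ∑ v, ∑ w, (ε v w : ℤ) * (x v * y v) := by
    rw [Finset.sum_comm]
    exact Finset.sum_congr rfl fun a _ => Finset.sum_congr rfl fun b _ => by rw [hsymm]
  have hD : ∑ v, ∑ w, (ε v w : ℤ) * (x w * y v) = ∑ v, ∑ w, (ε v w : ℤ) * (x v * y w) := by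
    rw [Finset.sum_comm]
    exact Finset.sum_congr rfl fun a _ => Finset.sum_congr rfl fun b _ => by rw [hsymm]
  have hA : ∀ v, ∑ w, (ε v w : ℤ) * (x v * y v) = (∑ w, (ε v w : ℤ)) * (x v * y v) := by
    intro v; rw [Finset.sum_mul]
  rw [e1]
  simp_rw [sub_eq_add_neg, Finset.sum_add_distrib, Finset.sum_neg_distrib]
  rw [hB, hD]
  simp_rw [hA]
  ring

lemma gform_add_const {V : Type*} [Fintype V] [DecidableEq V] (ε : V → V → ℕ)
    (hsymm : ∀ v w, ε v w = ε w v) (hloop : ∀ v, ε v v = 0) (x y : V → ℤ) (c : ℤ) :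
    gform ε x (fun v => y v + c) = gform ε x y := by
  have h1 := two_gform ε hsymm hloop x (fun v => y v + c)
  have h2 := two_gform ε hsymm hloop x y
  have h3 : (2:ℤ) * gform ε x (fun v => y v + c) = 2 * gform ε x y := by
    rw [h1, h2]
    exact Finset.sum_congr rfl fun v _ => Finset.sum_congr rfl fun w _ => by ring
  linarith

lemma gform_neg_neg {V : Type*} [Fintype V] [DecidableEq V] (ε : V → V → ℕ)
    (Y Z : V → ℤ) :
    gform ε (fun v => -Y v) (fun v => -Z v) = gform ε Y Z := by
  unfold gform
  simp [neg_mul_neg]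

lemma reach_const {α : Type*} {H : SimpleGraph α} (f : α → ℤ)
    (hf : ∀ a b, H.Adj a b → f a = f b) : ∀ {a b}, H.Reachable a b → f a = f b := by
  intro a b hr
  obtain ⟨w⟩ := hr
  induction w with
  | nil => rfl
  | cons h p ih => exact (hf _ _ h).trans ih

lemma walk_cross {V : Type*} (ε : V → V → ℕ) (hsymm : ∀ v w, ε v w = ε w v)
    (R : Finset V) [DecidableEq V] : ∀ {a b : V}, (gGraph ε).Walk a b → a ∈ R → b ∉ R →
    ∃ u u', u ∈ R ∧ u' ∉ R ∧ 0 < ε u u' := by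
  intro a b w
  induction w with
  | nil => intro ha hb; exact absurd ha hb
  | @cons u v b h p ih =>
    intro ha hb
    by_cases hv : v ∈ R
    · exact ih hv hb
    · obtain ⟨hne, h1 | h1⟩ := h
      · exact ⟨u, v, ha, hv, h1⟩
      · exact ⟨u, v, ha, hv, by rw [hsymm]; exact h1⟩

lemma gform_split {V : Type*} [Fintype V] [DecidableEq V] (ε : V → V → ℕ)
    (hsymm : ∀ v w, ε v w = ε w v) (hloop : ∀ v, ε v v = 0)
    (Y Z : V → ℤ) (hY : ∀ v, Y v = 0 ∨ Y v = 1) (hZ : ∀ v, Z v = 0 ∨ Z v = 1)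
    (hd : ∀ v, Y v = 0 ∨ Z v = 0)
    (hsep : ∀ v w, 0 < ε v w → Y v = 1 → Z w = 1 → False) :
    gform ε Y Z = 0 := by
  have h2 := two_gform ε hsymm hloop Y Z
  have hterm : ∀ v ∈ Finset.univ, ∀ w ∈ Finset.univ,
      (ε v w : ℤ) * ((Y v - Y w) * (Z v - Z w)) = 0 := by
    intro v _ w _
    rcases Nat.eq_zero_or_pos (ε v w) with h | h
    · simp [h]
    · have : (Y v - Y w) * (Z v - Z w) = 0 := by
        rcases hY v with h1 | h1 <;> rcases hY w with h2' | h2' <;>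
        rcases hZ v with h3 | h3 <;> rcases hZ w with h4 | h4 <;>
        rw [h1, h2', h3, h4] <;> try ring1
        · exact absurd (hd w) (by rw [h2', h4]; norm_num)
        · exact (hsep w v (lt_of_lt_of_eq h (hsymm v w)) h2' h3).elim
        · exact (hsep v w h h1 h4).elim
        · exact absurd (hd v) (by rw [h1, h3]; norm_num)
      rw [this, mul_zero]
  have hz : ∑ v, ∑ w, (ε v w : ℤ) * ((Y v - Y w) * (Z v - Z w)) = 0 :=
    Finset.sum_eq_zero fun v hv => Finset.sum_eq_zero fun w hw => hterm v hv w hw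
  linarith [h2, hz]

lemma not_mem_onesSub {V : Type*} {f : V → ℤ} {p q : V} (hp : f p = 1) (hq : f q = 0) :
    f ∉ onesSub V := by
  intro h
  obtain ⟨c, hc⟩ := (mem_onesSub_iff f).mp h
  rw [hc p] at hp; rw [hc q] at hq; omega

end Helpers

section Split

open Finset

lemma split_of_not_conn {V : Type*} [Fintype V] [DecidableEq V] (ε : V → V → ℕ)
    (S : Set V) (hS : S.Nonempty) (hnc : ¬ gConnOn ε S) :
    ∃ Y Z : V → ℤ, (∀ v, Y v = 0 ∨ Y v = 1) ∧ (∀ v, Z v = 0 ∨ Z v = 1)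
      ∧ (∀ v, Y v = 0 ∨ Z v = 0)
      ∧ (∃ v, Y v = 1) ∧ (∃ v, Z v = 1)
      ∧ (∀ v ∈ S, Y v + Z v = 1) ∧ (∀ v ∉ S, Y v + Z v = 0)
      ∧ (∀ v w, 0 < ε v w → Y v = 1 → Z w = 1 → False) := by
  classical
  set H : SimpleGraph S := SimpleGraph.fromRel (fun v w : S => 0 < ε v.1 w.1) with hH
  have hne : Nonempty S := hS.to_subtype
  have hnp : ¬ H.Preconnected := by
    intro hp
    have : H.Connected := by
      rw [SimpleGraph.connected_iff]
      exact ⟨hp, hne⟩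
    exact hnc this
  rw [SimpleGraph.Preconnected] at hnp
  push_neg at hnp
  obtain ⟨a, b, hab⟩ := hnp
  set P : V → Prop := fun v => ∃ hv : v ∈ S, H.Reachable a ⟨v, hv⟩ with hP
  have hPS : ∀ v, P v → v ∈ S := fun v hv => hv.1
  refine ⟨fun v => if P v then 1 else 0,
    fun v => (if v ∈ S then 1 else 0) - (if P v then 1 else 0), ?_, ?_, ?_, ?_, ?_, ?_, ?_, ?_⟩
  · intro v; by_cases hv : P v <;> simp [hv]
  · intro v
    by_cases hv : P v
    · have hvS : v ∈ S := hv.1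
      simp [hv, hvS]
    · by_cases hvS : v ∈ S <;> simp [hv, hvS]
  · intro v
    by_cases hv : P v
    · have hvS : v ∈ S := hv.1
      right; simp [hv, hvS]
    · left; simp [hv]
  · refine ⟨a.1, ?_⟩
    have : P a.1 := ⟨a.2, SimpleGraph.Reachable.refl a⟩
    simp [this]
  · refine ⟨b.1, ?_⟩
    have hb : ¬ P b.1 := by
      rintro ⟨hv, hr⟩
      exact hab hr
    simp [hb, b.2]
  · intro v hv; simp [hv]
  · intro v hv
    have : ¬ P v := fun hp => hv hp.1
    simp [hv, this]
  · intro v w hε hv hw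
    have hPv : P v := by
      by_contra hc; simp [hc] at hv
    have hvS : v ∈ S := hPv.1
    have hwS : w ∈ S := by
      by_contra hc
      have hPw : ¬ P w := fun hp => hc hp.1
      simp [hc, hPw] at hw
    have hPw : ¬ P w := by
      intro hp
      simp [hp, hwS] at hw
    apply hPw
    refine ⟨hwS, hPv.2.trans (SimpleGraph.Adj.reachable ?_)⟩
    refine ⟨?_, Or.inl hε⟩
    intro hEq
    have hvw : v = w := congrArg Subtype.val hEq
    subst hvw
    exact hPw hPv

end Split

lemma not_mem_onesSub' {V : Type*} {f : V → ℤ} {p q : V} (h : f p ≠ f q) :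
    f ∉ onesSub V := by
  intro hm
  obtain ⟨c, hc⟩ := (mem_onesSub_iff f).mp hm
  rw [hc p, hc q] at h
  exact h rfl

/-- Lemma 3.2 of the paper: a nonzero class `x` in the graph lattice `Λ(G)` of a
connected multigraph `G` is irreducible iff `x = [R]` for some `R ⊆ V` such that
the sub-multigraphs induced on `R` and on `V∖R` are both connected. -/
theorem stmt_4 {V : Type*} [Fintype V] [DecidableEq V] (ε : V → V → ℕ)
    (hcard : 2 ≤ Fintype.card V)
    (hsymm : ∀ v w, ε v w = ε w v) (hloop : ∀ v, ε v v = 0)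
    (hconn : (gGraph ε).Connected)
    (x : V → ℤ) (hx : x ∉ onesSub V) :
    gIrredRep ε x ↔
      ∃ R : Finset V, R ≠ ∅ ∧ R ≠ Finset.univ ∧ x - chiF R ∈ onesSub V ∧
        gConnOn ε (↑R : Set V) ∧ gConnOn ε ((↑R : Set V)ᶜ) := by
  classical
  have hVne : Nonempty V := by
    rw [← Fintype.card_pos_iff]; omega
  constructor
  · -- irreducible ⇒ exists R
    intro hirr
    obtain ⟨v0, -, hv0min⟩ := Finset.exists_min_image Finset.univ x
      ⟨hVne.some, Finset.mem_univ _⟩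
    set c : ℤ := x v0 with hc
    set x' : V → ℤ := fun v => x v - c with hx'
    have hx'0 : ∀ v, 0 ≤ x' v := fun v => by
      have := hv0min v (Finset.mem_univ v); simp [hx']; linarith
    obtain ⟨v1, -, hv1max⟩ := Finset.exists_max_image Finset.univ x'
      ⟨hVne.some, Finset.mem_univ _⟩
    set M : ℤ := x' v1 with hMdef
    have hv1max' : ∀ v, x' v ≤ M := fun v => hv1max v (Finset.mem_univ v)
    have hx'v0 : x' v0 = 0 := by simp [hx', hc]
    have hM1 : 1 ≤ M := by
      by_contra h
      apply hx
      refine (mem_onesSub_iff x).mpr ⟨c, fun v => ?_⟩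
      have h1 := hx'0 v
      have h2 := hv1max' v
      simp [hx'] at h1 h2 ⊢
      omega
    -- Step 2 : M = 1
    have hM : M = 1 := by
      by_contra hM2'
      have hM2 : 2 ≤ M := by omega
      apply hirr
      set T := Finset.univ.filter (fun v => x' v = M) with hT
      have hv1T : chiF T v1 = 1 := by simp [chiF, hT, hMdef]
      have hv0T : chiF T v0 = 0 := by simp [chiF, hT]; omega
      refine ⟨chiF T, fun v => x' v - chiF T v, ?_, ?_, ?_, ?_⟩
      · exact not_mem_onesSub' (p := v1) (q := v0) (by rw [hv1T, hv0T]; omega)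
      · refine not_mem_onesSub' (p := v1) (q := v0) ?_
        simp only [hv1T, hv0T, hx'v0]
        omega
      · refine (mem_onesSub_iff _).mpr ⟨c, fun v => ?_⟩
        simp [hx']
      · have h2g := two_gform ε hsymm hloop (chiF T) (fun v => x' v - chiF T v)
        have hterm : ∀ v w, 0 ≤ (ε v w : ℤ) *
            ((chiF T v - chiF T w) * ((x' v - chiF T v) - (x' w - chiF T w))) := by
          intro v w
          have hεnn : (0:ℤ) ≤ (ε v w : ℤ) := Int.natCast_nonneg _
          by_cases hv : v ∈ T <;> by_cases hw : w ∈ T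
          · simp [chiF, hv, hw]
          · have hvM : x' v = M := by simpa [hT] using hv
            have hwM : x' w ≤ M - 1 := by
              have h1 := hv1max' w
              have h2 : ¬ x' w = M := by simpa [hT] using hw
              omega
            have hch : chiF T v = 1 := by simp [chiF, hv]
            have hch' : chiF T w = 0 := by simp [chiF, hw]
            rw [hch, hch']
            have : (0:ℤ) ≤ (1 - 0) * ((x' v - 1) - (x' w - 0)) := by nlinarith
            exact mul_nonneg hεnn this
          · have hwM : x' w = M := by simpa [hT] using hw
            have hvM : x' v ≤ M - 1 := by
              have h1 := hv1max' v
              have h2 : ¬ x' v = M := by simpa [hT] using hv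
              omega
            have hch : chiF T v = 0 := by simp [chiF, hv]
            have hch' : chiF T w = 1 := by simp [chiF, hw]
            rw [hch, hch']
            have : (0:ℤ) ≤ (0 - 1) * ((x' v - 0) - (x' w - 1)) := by nlinarith
            exact mul_nonneg hεnn this
          · simp [chiF, hv, hw]
        have hsum : 0 ≤ ∑ v, ∑ w, (ε v w : ℤ) *
            ((chiF T v - chiF T w) * ((x' v - chiF T v) - (x' w - chiF T w))) :=
          Finset.sum_nonneg fun v _ => Finset.sum_nonneg fun w _ => hterm v w
        have : 0 ≤ 2 * gform ε (chiF T) (fun v => x' v - chiF T v) := by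
          rw [h2g]; exact hsum
        linarith
    -- Step 3 : R
    set R := Finset.univ.filter (fun v => x' v = 1) with hR
    have hchi : ∀ v, chiF R v = x' v := by
      intro v
      have h0 := hx'0 v
      have h1 := hv1max' v
      rw [hM] at h1
      by_cases hv : x' v = 1
      · simp [chiF, hR, hv]
      · simp [chiF, hR, hv]; omega
    have hxR : x - chiF R ∈ onesSub V := by
      refine (mem_onesSub_iff _).mpr ⟨c, fun v => ?_⟩
      simp [hchi v, hx']
    have hv1R : v1 ∈ R := by simp [hR]; omega
    have hv0R : v0 ∉ R := by simp [hR]; omega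
    have hRne : R ≠ ∅ := Finset.ne_empty_of_mem hv1R
    have hRnu : R ≠ Finset.univ := fun h => hv0R (h ▸ Finset.mem_univ v0)
    refine ⟨R, hRne, hRnu, hxR, ?_, ?_⟩
    · -- R connected
      by_contra hnc
      obtain ⟨Y, Z, hY, hZ, hd, ⟨p, hp⟩, ⟨q, hq⟩, hin, hout, hsep⟩ :=
        split_of_not_conn ε (↑R : Set V) ⟨v1, Finset.mem_coe.mpr hv1R⟩ hnc
      apply hirr
      have hYq : Y q = 0 := (hd q).resolve_right (by omega)
      have hZp : Z p = 0 := (hd p).resolve_left (by omega)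
      refine ⟨Y, Z, not_mem_onesSub' (p := p) (q := q) (by omega),
        not_mem_onesSub' (p := q) (q := p) (by omega), ?_, ?_⟩
      · refine (mem_onesSub_iff _).mpr ⟨c, fun v => ?_⟩
        have hYZ : Y v + Z v = chiF R v := by
          by_cases hv : v ∈ R
          · rw [hin v (Finset.mem_coe.mpr hv)]; simp [chiF, hv]
          · rw [hout v (fun hvs => hv (Finset.mem_coe.mp hvs))]; simp [chiF, hv]
        have := hchi v
        simp [Pi.sub_apply, Pi.add_apply, hYZ, this, hx']
      · exact le_of_eq (gform_split ε hsymm hloop Y Z hY hZ hd hsep).symm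
    · -- complement connected
      by_contra hnc
      have hv0c : v0 ∈ ((↑R : Set V)ᶜ) := by
        simp only [Set.mem_compl_iff, Finset.mem_coe]
        exact hv0R
      obtain ⟨Y, Z, hY, hZ, hd, ⟨p, hp⟩, ⟨q, hq⟩, hin, hout, hsep⟩ :=
        split_of_not_conn ε ((↑R : Set V)ᶜ) ⟨v0, hv0c⟩ hnc
      apply hirr
      have hYq : Y q = 0 := (hd q).resolve_right (by omega)
      have hZp : Z p = 0 := (hd p).resolve_left (by omega)
      refine ⟨fun v => -Y v, fun v => -Z v,
        not_mem_onesSub' (p := p) (q := q) (by show -Y p ≠ -Y q; omega),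
        not_mem_onesSub' (p := q) (q := p) (by show -Z q ≠ -Z p; omega), ?_, ?_⟩
      · refine (mem_onesSub_iff _).mpr ⟨c + 1, fun v => ?_⟩
        have hYZ : Y v + Z v = 1 - chiF R v := by
          by_cases hv : v ∈ R
          · rw [hout v (by simp [Finset.mem_coe, hv])]
            simp [chiF, hv]
          · rw [hin v (by simp [Finset.mem_coe, hv])]
            simp [chiF, hv]
        have := hchi v
        simp only [Pi.sub_apply, Pi.add_apply]
        have hxv : x v = x' v + c := by simp [hx']
        omega
      · rw [gform_neg_neg ε Y Z]
        exact le_of_eq (gform_split ε hsymm hloop Y Z hY hZ hd hsep).symm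
  · -- exists R ⇒ irreducible
    rintro ⟨R, hRne, hRnu, hxR, hcR, hcRc⟩
    rintro ⟨y, z, hy, hz, hmem, hpos⟩
    have h1 : chiF R - (y + z) ∈ onesSub V := by
      have h2 := Submodule.sub_mem _ hmem hxR
      have h3 : x - (y + z) - (x - chiF R) = chiF R - (y + z) := by ring
      rwa [h3] at h2
    obtain ⟨c, hcc⟩ := (mem_onesSub_iff _).mp h1
    have hc' : ∀ v, chiF R v - (y v + z v) = c := fun v => by simpa using hcc v
    set z' : V → ℤ := fun v => z v + c with hz'
    have key : ∀ v, chiF R v = y v + z' v := fun v => by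
      have := hc' v; simp only [hz']; linarith
    have hpos' : 0 ≤ gform ε y z' := by
      rw [show gform ε y z' = gform ε y z from gform_add_const ε hsymm hloop y z c]
      exact hpos
    have h2form := two_gform ε hsymm hloop y z'
    have hterm : ∀ v w, (ε v w : ℤ) * ((y v - y w) * (z' v - z' w)) ≤ 0 := by
      intro v w
      have hεnn : (0:ℤ) ≤ (ε v w : ℤ) := Int.natCast_nonneg _
      have hab : (y v - y w) + (z' v - z' w) = chiF R v - chiF R w := by
        rw [key v, key w]; ring
      have hsq : ((y v - y w) + (z' v - z' w))^2 ≤ 1 := by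
        rw [hab]; unfold chiF; split_ifs <;> norm_num
      have h4 : 4 * ((y v - y w) * (z' v - z' w)) ≤ 1 := by
        nlinarith [sq_nonneg ((y v - y w) - (z' v - z' w))]
      have hab0 : (y v - y w) * (z' v - z' w) ≤ 0 := by
        by_contra hcon
        push_neg at hcon
        have : 1 ≤ (y v - y w) * (z' v - z' w) := hcon
        linarith
      exact mul_nonpos_iff.mpr (Or.inl ⟨hεnn, hab0⟩)
    have hsum0 : ∑ v, ∑ w, (ε v w : ℤ) * ((y v - y w) * (z' v - z' w)) = 0 := by
      have hle : ∑ v, ∑ w, (ε v w : ℤ) * ((y v - y w) * (z' v - z' w)) ≤ 0 :=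
        Finset.sum_nonpos fun v _ => Finset.sum_nonpos fun w _ => hterm v w
      have hge : 0 ≤ ∑ v, ∑ w, (ε v w : ℤ) * ((y v - y w) * (z' v - z' w)) := by
        rw [← h2form]; linarith
      omega
    have hzero : ∀ v w, (ε v w : ℤ) * ((y v - y w) * (z' v - z' w)) = 0 := by
      intro v w
      have houter := (Finset.sum_eq_zero_iff_of_nonpos
        (fun v _ => Finset.sum_nonpos fun w _ => hterm v w)).mp hsum0 v (Finset.mem_univ v)
      exact (Finset.sum_eq_zero_iff_of_nonpos
        (fun w _ => hterm v w)).mp houter w (Finset.mem_univ w)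
    have hprod : ∀ v w, 0 < ε v w → (y v - y w) * (z' v - z' w) = 0 := by
      intro v w hε
      have hε' : (ε v w : ℤ) ≠ 0 := by exact_mod_cast hε.ne'
      rcases mul_eq_zero.mp (hzero v w) with h | h
      · exact absurd h hε'
      · exact h
    have hsame : ∀ v w, 0 < ε v w → (v ∈ R ↔ w ∈ R) → y v = y w := by
      intro v w hε hvw
      have hab : (y v - y w) + (z' v - z' w) = 0 := by
        have h1 := key v; have h2 := key w
        have : chiF R v = chiF R w := by
          unfold chiF; by_cases hv : v ∈ R
          · simp [hv, hvw.mp hv]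
          · have hw' : w ∉ R := fun hw => hv (hvw.mpr hw)
            simp [hv, hw']
        rw [h1, h2] at this; linarith
      rcases mul_eq_zero.mp (hprod v w hε) with h | h <;> linarith
    -- y constant on R and on complement
    obtain ⟨v1, hv1⟩ := Finset.nonempty_of_ne_empty hRne
    obtain ⟨w1, hw1⟩ : ∃ w, w ∉ R := by
      by_contra hcon
      push_neg at hcon
      exact hRnu (Finset.eq_univ_iff_forall.mpr hcon)
    have hyR : ∀ v, v ∈ R → y v = y v1 := by
      intro v hv
      have hreach := hcR.preconnected ⟨v, Finset.mem_coe.mpr hv⟩ ⟨v1, Finset.mem_coe.mpr hv1⟩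
      refine reach_const (H := SimpleGraph.fromRel (fun a b : (↑R : Set V) => 0 < ε a.1 b.1))
        (fun p => y p.1) ?_ hreach
      rintro a b ⟨hne', h1 | h1⟩
      · exact hsame a.1 b.1 h1
          (iff_of_true (Finset.mem_coe.mp a.2) (Finset.mem_coe.mp b.2))
      · exact (hsame b.1 a.1 h1
          (iff_of_true (Finset.mem_coe.mp b.2) (Finset.mem_coe.mp a.2))).symm
    have hyC : ∀ v, v ∉ R → y v = y w1 := by
      intro v hv
      have hvc : v ∈ ((↑R : Set V)ᶜ) := by
        simp only [Set.mem_compl_iff, Finset.mem_coe]; exact hv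
      have hwc : w1 ∈ ((↑R : Set V)ᶜ) := by
        simp only [Set.mem_compl_iff, Finset.mem_coe]; exact hw1
      have hreach := hcRc.preconnected ⟨v, hvc⟩ ⟨w1, hwc⟩
      refine reach_const (H := SimpleGraph.fromRel (fun a b : ↥((↑R : Set V)ᶜ) => 0 < ε a.1 b.1))
        (fun p => y p.1) ?_ hreach
      rintro a b ⟨hne', h1 | h1⟩
      · refine hsame a.1 b.1 h1 (iff_of_false ?_ ?_)
        · exact fun hm => a.2 (Finset.mem_coe.mpr hm)
        · exact fun hm => b.2 (Finset.mem_coe.mpr hm)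
      · refine (hsame b.1 a.1 h1 (iff_of_false ?_ ?_)).symm
        · exact fun hm => b.2 (Finset.mem_coe.mpr hm)
        · exact fun hm => a.2 (Finset.mem_coe.mpr hm)
    set α := y v1 with hα
    set β := y w1 with hβ
    have hαβ : α ≠ β := by
      intro h
      apply hy
      refine (mem_onesSub_iff _).mpr ⟨α, fun v => ?_⟩
      by_cases hv : v ∈ R
      · exact hyR v hv
      · rw [hyC v hv, ← h]
    -- crossing edge
    obtain ⟨wk⟩ := hconn.preconnected v1 w1
    obtain ⟨u, u', hu, hu', hε⟩ := walk_cross ε hsymm R wk hv1 hw1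
    have ha : y u - y u' = α - β := by rw [hyR u hu, hyC u' hu']
    have hane : y u - y u' ≠ 0 := by rw [ha]; intro h; apply hαβ; linarith
    have hb : z' u - z' u' = 0 := by
      rcases mul_eq_zero.mp (hprod u u' hε) with h | h
      · exact absurd h hane
      · exact h
    have habs : (y u - y u') + (z' u - z' u') = 1 := by
      have h1 := key u; have h2 := key u'
      have hcu : chiF R u = 1 := by simp [chiF, hu]
      have hcu' : chiF R u' = 0 := by simp [chiF, hu']
      rw [hcu] at h1; rw [hcu'] at h2; linarith
    have hαβ1 : α = β + 1 := by rw [ha] at habs; linarith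
    -- z' constant
    apply hz
    refine (mem_onesSub_iff _).mpr ⟨1 - α - c, fun v => ?_⟩
    have hzv : z v = z' v - c := by simp [hz']
    by_cases hv : v ∈ R
    · have h1 := key v
      have hcv : chiF R v = 1 := by simp [chiF, hv]
      rw [hcv] at h1
      rw [hzv, hyR v hv] at *
      omega
    · have h1 := key v
      have hcv : chiF R v = 0 := by simp [chiF, hv]
      rw [hcv] at h1
      have := hyC v hv
      omega
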